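/- arXiv:1110.3500 — 5 statements merged into one kernel-verified Lean document; each statement's English description precedes it below -/
import Mathlib

section
/- The function K̃0(s) = 4·(coth(s/2)/s - 2/s^2) is strictly positive for all real s ≠ 0. -/
noncomputable def Ktilde0 (s : ℝ) : ℝ :=
  4 * ((Real.cosh (s/2) / Real.sinh (s/2)) / s - 2 / s ^ 2)

lemma aux_sinh_lt (t : ℝ) (ht : 0 < t) : Real.sinh t < t * Real.cosh t := by
  have key : StrictMonoOn (fun x : ℝ => x * Real.cosh x - Real.sinh x) (Set.Ici 0) := by
    apply strictMonoOn_of_deriv_pos (convex_Ici 0)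
    · fun_prop
    · intro x hx
      rw [interior_Ici] at hx
      have hd : HasDerivAt (fun x : ℝ => x * Real.cosh x - Real.sinh x)
          (1 * Real.cosh x + x * Real.sinh x - Real.cosh x) x :=
        ((hasDerivAt_id x).mul (Real.hasDerivAt_cosh x)).sub (Real.hasDerivAt_sinh x)
      rw [hd.deriv]
      have : (0:ℝ) < x * Real.sinh x := mul_pos hx (Real.sinh_pos_iff.2 hx)
      linarith
  have := key (Set.self_mem_Ici) (Set.mem_Ici.2 ht.le) ht
  simpa using this

theorem stmt_2 : ∀ s : ℝ, s ≠ 0 → 0 < Ktilde0 s := by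
  intro s hs
  have hsinh : Real.sinh (s/2) ≠ 0 := by
    simp [Real.sinh_eq_zero, hs]
  have hK : Ktilde0 s = 4 * (s * Real.cosh (s/2) - 2 * Real.sinh (s/2)) /
      (Real.sinh (s/2) * s ^ 2) := by
    unfold Ktilde0
    field_simp
  rw [hK]
  rcases lt_or_gt_of_ne hs with hneg | hpos
  · have ht : 0 < -s/2 := by linarith
    have h1 := aux_sinh_lt (-s/2) ht
    rw [show -s/2 = -(s/2) by ring, Real.sinh_neg, Real.cosh_neg] at h1
    apply div_pos_of_neg_of_neg
    · nlinarith
    · have : Real.sinh (s/2) < 0 := Real.sinh_neg_iff.2 (by linarith)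
      have : (0:ℝ) < s ^ 2 := by positivity
      nlinarith
  · have ht : 0 < s/2 := by linarith
    have h1 := aux_sinh_lt (s/2) ht
    apply div_pos
    · nlinarith
    · have : 0 < Real.sinh (s/2) := Real.sinh_pos_iff.2 ht
      positivity
end

section
/- For all real s, t with s, t, s+t all nonzero, the function K̃0(s) = 4·(coth(s/2)/s - 2/s^2) and H̃0(s,t) = (4·sinh((s+t)/2)/(s+t))·H0(s,t), where H0 is given by the displayed formula, satisfy the functional relation -½·H̃0(s,t) = (K̃0(t) - K̃0(s))/(s+t) + (K̃0(s+t) - K̃0(t))/s - (K̃0(s+t) - K̃0(s))/t. -/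
noncomputable def H0 (s t : ℝ) : ℝ :=
  (t * (s + t) * Real.cosh s - s * (s + t) * Real.cosh t +
    (s - t) * (s + t + Real.sinh s + Real.sinh t - Real.sinh (s + t))) /
  (s * t * (s + t) * Real.sinh (s/2) * Real.sinh (t/2) * (Real.sinh ((s + t)/2)) ^ 2)

noncomputable def Htilde0 (s t : ℝ) : ℝ :=
  4 * (Real.sinh ((s + t)/2) / (s + t)) * H0 s t

set_option maxHeartbeats 4000000 in
theorem stmt_4 : ∀ s t : ℝ, s ≠ 0 → t ≠ 0 → s + t ≠ 0 →
    -(1/2 : ℝ) * Htilde0 s t =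
      (Ktilde0 t - Ktilde0 s) / (s + t) +
      (Ktilde0 (s + t) - Ktilde0 t) / s -
      (Ktilde0 (s + t) - Ktilde0 s) / t := by
  intro s t hs ht hst
  obtain ⟨u, hudef⟩ : ∃ u, Real.exp (s/2) = u := ⟨_, rfl⟩
  obtain ⟨v, hvdef⟩ : ∃ v, Real.exp (t/2) = v := ⟨_, rfl⟩
  have hu : u ≠ 0 := hudef ▸ (Real.exp_pos _).ne'
  have hv : v ≠ 0 := hvdef ▸ (Real.exp_pos _).ne'
  have e1 : Real.exp s = u^2 := by
    rw [← hudef, sq, ← Real.exp_add, show s/2+s/2 = s by ring]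
  have e2 : Real.exp t = v^2 := by
    rw [← hvdef, sq, ← Real.exp_add, show t/2+t/2 = t by ring]
  have e3 : Real.exp (s+t) = u^2*v^2 := by rw [Real.exp_add, e1, e2]
  have e4 : Real.exp ((s+t)/2) = u*v := by
    rw [show (s+t)/2 = s/2 + t/2 by ring, Real.exp_add, hudef, hvdef]
  have hu2 : u^2 - 1 ≠ 0 := by
    rw [← e1]; simpa [sub_eq_zero, Real.exp_eq_one_iff] using hs
  have hv2 : v^2 - 1 ≠ 0 := by
    rw [← e2]; simpa [sub_eq_zero, Real.exp_eq_one_iff] using ht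
  have huv2 : u^2*v^2 - 1 ≠ 0 := by
    rw [← e3]; simpa [sub_eq_zero, Real.exp_eq_one_iff] using hst
  have rs1 : Real.sinh (s/2) = (u^2 - 1)/(2*u) := by
    rw [Real.sinh_eq, Real.exp_neg, hudef]; field_simp
  have rc1 : Real.cosh (s/2) = (u^2 + 1)/(2*u) := by
    rw [Real.cosh_eq, Real.exp_neg, hudef]; field_simp
  have rs2 : Real.sinh (t/2) = (v^2 - 1)/(2*v) := by
    rw [Real.sinh_eq, Real.exp_neg, hvdef]; field_simp
  have rc2 : Real.cosh (t/2) = (v^2 + 1)/(2*v) := by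
    rw [Real.cosh_eq, Real.exp_neg, hvdef]; field_simp
  have rs3 : Real.sinh ((s+t)/2) = (u^2*v^2 - 1)/(2*(u*v)) := by
    rw [Real.sinh_eq, Real.exp_neg, e4]; field_simp
  have rc3 : Real.cosh ((s+t)/2) = (u^2*v^2 + 1)/(2*(u*v)) := by
    rw [Real.cosh_eq, Real.exp_neg, e4]; field_simp
  have rS : Real.sinh s = (u^4 - 1)/(2*u^2) := by
    rw [Real.sinh_eq, Real.exp_neg, e1]; field_simp
  have rC : Real.cosh s = (u^4 + 1)/(2*u^2) := by
    rw [Real.cosh_eq, Real.exp_neg, e1]; field_simp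
  have rT : Real.sinh t = (v^4 - 1)/(2*v^2) := by
    rw [Real.sinh_eq, Real.exp_neg, e2]; field_simp
  have rCT : Real.cosh t = (v^4 + 1)/(2*v^2) := by
    rw [Real.cosh_eq, Real.exp_neg, e2]; field_simp
  have rST : Real.sinh (s+t) = (u^4*v^4 - 1)/(2*(u^2*v^2)) := by
    rw [Real.sinh_eq, Real.exp_neg, e3]; field_simp
  unfold Htilde0 H0 Ktilde0
  rw [rs1, rc1, rs2, rc2, rs3, rc3, rS, rC, rT, rCT, rST]
  field_simp
  ring
end

section
/- For all real s ≠ 0, (s/2)·H̃0(s,-s) = s·(d/ds)K̃0(s) + 2·(K̃0(s) - K̃0(0)), where K̃0(s) = 4·(coth(s/2)/s - 2/s^2), K̃0(0) = 2/3 (the limit value), and H̃0(s,-s) is the limit as t → -s of H̃0(s,t) = (4·sinh((s+t)/2)/(s+t))·H0(s,t). -/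
/-- The continuous extension of `H0` to the anti-diagonal `t = -s`. -/
noncomputable def H0anti (s : ℝ) : ℝ :=
  -4 * (3 - 3 * Real.exp (2*s) + s + 4 * Real.exp s * s + Real.exp (2*s) * s) /
    (3 * ((Real.exp s - 1) ^ 2 * s ^ 2))

/-- `H̃0(s, -s) = 2 · H0(s, -s)` (the limit value of `H̃0(s,t)` as `t → -s`). -/
noncomputable def Htilde0anti (s : ℝ) : ℝ := 2 * H0anti s

open Real in
lemma hasDerivAt_K (s : ℝ) (hs : s ≠ 0) :
    HasDerivAt Ktilde0
      (4 * (((sinh (s/2) * (1/2) * sinh (s/2) - cosh (s/2) * (cosh (s/2) * (1/2))) / sinh (s/2) ^ 2 * s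
        - cosh (s/2) / sinh (s/2) * 1) / s ^ 2 - (0 * s ^ 2 - 2 * (2 * s ^ 1)) / (s ^ 2) ^ 2)) s := by
  have h2 : sinh (s/2) ≠ 0 := by
    simp [Real.sinh_ne_zero]; exact hs
  have hid : HasDerivAt (fun x : ℝ => x / 2) (1/2) s := by
    simpa using (hasDerivAt_id s).div_const 2
  have hc : HasDerivAt (fun x : ℝ => cosh (x/2)) (sinh (s/2) * (1/2)) s :=
    by exact (Real.hasDerivAt_cosh (s/2)).comp s hid
  have hsh : HasDerivAt (fun x : ℝ => sinh (x/2)) (cosh (s/2) * (1/2)) s :=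
    by exact (Real.hasDerivAt_sinh (s/2)).comp s hid
  have hq2 : HasDerivAt (fun x : ℝ => (cosh (x/2) / sinh (x/2)) / x)
      (((sinh (s/2) * (1/2) * sinh (s/2) - cosh (s/2) * (cosh (s/2) * (1/2))) / sinh (s/2) ^ 2 * s
        - cosh (s/2) / sinh (s/2) * 1) / s ^ 2) s :=
    (hc.div hsh h2).div (hasDerivAt_id s) hs
  have hp : HasDerivAt (fun x : ℝ => 2 / x ^ 2)
      ((0 * s ^ 2 - 2 * (2 * s ^ 1)) / (s ^ 2) ^ 2) s :=
    (hasDerivAt_const s 2).div (hasDerivAt_pow 2 s) (pow_ne_zero 2 hs)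
  exact ((hq2.sub hp).const_mul 4)

theorem stmt_6 : ∀ s : ℝ, s ≠ 0 →
    s / 2 * Htilde0anti s = s * deriv Ktilde0 s + 2 * (Ktilde0 s - 2/3) := by
  intro s hs
  rw [(hasDerivAt_K s hs).deriv]
  unfold Htilde0anti H0anti Ktilde0
  rw [Real.cosh_eq, Real.sinh_eq]
  have hexp : Real.exp s = Real.exp (s/2) ^ 2 := by
    rw [← Real.exp_nat_mul]; ring_nf
  have hexp2 : Real.exp (2*s) = Real.exp (s/2) ^ 4 := by
    rw [← Real.exp_nat_mul]; ring_nf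
  have hneg : Real.exp (-(s/2)) = (Real.exp (s/2))⁻¹ := Real.exp_neg _
  rw [hexp, hexp2, hneg]
  have hEpos : Real.exp (s/2) ≠ 0 := (Real.exp_pos _).ne'
  have hE1 : Real.exp (s/2) ^ 2 - 1 ≠ 0 := by
    rw [← hexp]
    intro h
    exact hs (Real.exp_injective (by rw [Real.exp_zero]; linarith))
  have hE2 : Real.exp (s/2) - (Real.exp (s/2))⁻¹ ≠ 0 := by
    intro h
    apply hE1
    field_simp at h
    linarith
  set E := Real.exp (s/2) with hEdef
  have hr1 : E - E⁻¹ = (E ^ 2 - 1) / E := by field_simp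
  have hr2 : E + E⁻¹ = (E ^ 2 + 1) / E := by field_simp
  rw [hr1, hr2]
  field_simp
  ring
end

section
/- For a, b > 0 with a ≠ 1, b ≠ 1, a ≠ b, the integral ∫_0^∞ (u+1)^{-1}(a·u+1)^{-1}(b·u+1)^{-1}·u du equals ((b-1)·log(a) - (a-1)·log(b)) / ((a-1)(b-1)(b-a)). -/
open MeasureTheory Filter Topology

theorem stmt_13 (a b : ℝ) (ha : 0 < a) (hb : 0 < b) (ha1 : a ≠ 1) (hb1 : b ≠ 1)
    (hab : a ≠ b) :
    (∫ u in Set.Ioi (0:ℝ), (u + 1)⁻¹ * (a * u + 1)⁻¹ * (b * u + 1)⁻¹ * u) =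
      ((b - 1) * Real.log a - (a - 1) * Real.log b) /
        ((a - 1) * (b - 1) * (b - a)) := by
  have ha1' : a - 1 ≠ 0 := sub_ne_zero.2 ha1
  have hb1' : b - 1 ≠ 0 := sub_ne_zero.2 hb1
  have hab' : a - b ≠ 0 := sub_ne_zero.2 hab
  have hba' : b - a ≠ 0 := sub_ne_zero.2 (Ne.symm hab)
  set c1 : ℝ := -1/((a-1)*(b-1)) with hc1
  set c2 : ℝ := -1/((a-1)*(a-b)) with hc2
  set c3 : ℝ := -1/((b-1)*(b-a)) with hc3
  have hsum : c2 = -(c1 + c3) := by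
    rw [hc1, hc2, hc3]; field_simp; ring
  set F : ℝ → ℝ := fun x =>
    c1 * Real.log (x+1) + c2 * Real.log (a*x+1) + c3 * Real.log (b*x+1) with hF
  have hcont : ContinuousOn F (Set.Ici (0:ℝ)) := by
    apply ContinuousOn.add
    apply ContinuousOn.add
    · exact continuousOn_const.mul (((continuousOn_id.add continuousOn_const)).log
        (fun x hx => by have : (0:ℝ) ≤ x := hx; simp only [id, Pi.add_apply, Pi.mul_apply]; positivity))
    · exact continuousOn_const.mul (((continuousOn_const.mul continuousOn_id).add
        continuousOn_const).log
        (fun x hx => by have : (0:ℝ) ≤ x := hx; simp only [id, Pi.add_apply, Pi.mul_apply]; positivity))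
    · exact continuousOn_const.mul (((continuousOn_const.mul continuousOn_id).add
        continuousOn_const).log
        (fun x hx => by have : (0:ℝ) ≤ x := hx; simp only [id, Pi.add_apply, Pi.mul_apply]; positivity))
  have hderiv : ∀ x ∈ Set.Ioi (0:ℝ),
      HasDerivAt F ((x + 1)⁻¹ * (a * x + 1)⁻¹ * (b * x + 1)⁻¹ * x) x := by
    intro x hx
    have hx0 : 0 < x := hx
    have h1 : (0:ℝ) < x + 1 := by linarith
    have h2 : (0:ℝ) < a*x+1 := by nlinarith
    have h3 : (0:ℝ) < b*x+1 := by nlinarith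
    have d1 : HasDerivAt (fun x : ℝ => Real.log (x+1)) (1/(x+1)) x := by
      simpa using ((hasDerivAt_id x).add_const 1).log h1.ne'
    have d2 : HasDerivAt (fun x : ℝ => Real.log (a*x+1)) (a/(a*x+1)) x := by
      simpa using (((hasDerivAt_id x).const_mul a).add_const 1).log h2.ne'
    have d3 : HasDerivAt (fun x : ℝ => Real.log (b*x+1)) (b/(b*x+1)) x := by
      simpa using (((hasDerivAt_id x).const_mul b).add_const 1).log h3.ne'
    have key : HasDerivAt F (c1*(1/(x+1)) + c2*(a/(a*x+1)) + c3*(b/(b*x+1))) x :=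
      ((d1.const_mul c1).add (d2.const_mul c2)).add (d3.const_mul c3)
    convert key using 1
    rw [hc1, hc2, hc3]
    field_simp
    ring
  have hnonneg : ∀ x ∈ Set.Ioi (0:ℝ),
      0 ≤ (x + 1)⁻¹ * (a * x + 1)⁻¹ * (b * x + 1)⁻¹ * x := by
    intro x hx
    have hx0 : 0 < x := hx
    have h1 : (0:ℝ) < x + 1 := by linarith
    have h2 : (0:ℝ) < a*x+1 := by nlinarith
    have h3 : (0:ℝ) < b*x+1 := by nlinarith
    positivity
  -- the limit at infinity
  have hq1 : Tendsto (fun x : ℝ => (x+1)/(a*x+1)) atTop (𝓝 (1/a)) := by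
    have heq : (fun x : ℝ => (x+1)/(a*x+1)) =ᶠ[atTop] fun x => (1+x⁻¹)/(a+x⁻¹) := by
      filter_upwards [eventually_gt_atTop (0:ℝ)] with x hx
      have hx' : x ≠ 0 := hx.ne'
      have h2 : (0:ℝ) < a*x+1 := by nlinarith
      field_simp
    have : Tendsto (fun x : ℝ => (1+x⁻¹)/(a+x⁻¹)) atTop (𝓝 ((1+0)/(a+0))) :=
      (tendsto_const_nhds.add tendsto_inv_atTop_zero).div
        (tendsto_const_nhds.add tendsto_inv_atTop_zero) (by simpa using ha.ne')
    simpa using Tendsto.congr' heq.symm this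
  have hq2 : Tendsto (fun x : ℝ => (b*x+1)/(a*x+1)) atTop (𝓝 (b/a)) := by
    have heq : (fun x : ℝ => (b*x+1)/(a*x+1)) =ᶠ[atTop] fun x => (b+x⁻¹)/(a+x⁻¹) := by
      filter_upwards [eventually_gt_atTop (0:ℝ)] with x hx
      have hx' : x ≠ 0 := hx.ne'
      field_simp
    have : Tendsto (fun x : ℝ => (b+x⁻¹)/(a+x⁻¹)) atTop (𝓝 ((b+0)/(a+0))) :=
      (tendsto_const_nhds.add tendsto_inv_atTop_zero).div
        (tendsto_const_nhds.add tendsto_inv_atTop_zero) (by simpa using ha.ne')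
    simpa using Tendsto.congr' heq.symm this
  have hl1 : Tendsto (fun x : ℝ => Real.log ((x+1)/(a*x+1))) atTop (𝓝 (Real.log (1/a))) :=
    ((Real.continuousAt_log (by positivity)).tendsto.comp hq1)
  have hl2 : Tendsto (fun x : ℝ => Real.log ((b*x+1)/(a*x+1))) atTop (𝓝 (Real.log (b/a))) :=
    ((Real.continuousAt_log (by positivity)).tendsto.comp hq2)
  have hFlim : Tendsto F atTop (𝓝 (c1 * Real.log (1/a) + c3 * Real.log (b/a))) := by
    have heq : (fun x : ℝ => c1 * Real.log ((x+1)/(a*x+1)) + c3 * Real.log ((b*x+1)/(a*x+1)))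
        =ᶠ[atTop] F := by
      filter_upwards [eventually_gt_atTop (0:ℝ)] with x hx
      have h1 : (0:ℝ) < x + 1 := by linarith
      have h2 : (0:ℝ) < a*x+1 := by nlinarith
      have h3 : (0:ℝ) < b*x+1 := by nlinarith
      simp only [hF, Real.log_div h1.ne' h2.ne', Real.log_div h3.ne' h2.ne', hsum]
      ring
    exact Tendsto.congr' heq ((hl1.const_mul c1).add (hl2.const_mul c3))
  have hF0 : F 0 = 0 := by simp [hF]
  have := integral_Ioi_of_hasDerivAt_of_nonneg (hcont 0 Set.self_mem_Ici) hderiv hnonneg hFlim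
  rw [this, hF0, sub_zero, hc1, hc3,
    Real.log_div hb.ne' ha.ne', one_div, Real.log_inv]
  field_simp
  ring
end

section
/- For a, b > 0 with a ≠ 1, b ≠ 1, a ≠ b, the integral ∫_0^∞ (u+1)^{-2}(a·u+1)^{-1}(b·u+1)^{-1}·u^2 du equals [(b-1)^2·log(a) + (a-1)·((a-b)(b-1) - (a-1)·log(b))] / ((a-1)^2·(a-b)·(b-1)^2). -/
open MeasureTheory

theorem stmt_14 (a b : ℝ) (ha : 0 < a) (hb : 0 < b) (ha1 : a ≠ 1) (hb1 : b ≠ 1)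
    (hab : a ≠ b) :
    (∫ u in Set.Ioi (0:ℝ), ((u + 1)⁻¹) ^ 2 * (a * u + 1)⁻¹ * (b * u + 1)⁻¹ * u ^ 2) =
      ((b - 1) ^ 2 * Real.log a +
        (a - 1) * ((a - b) * (b - 1) - (a - 1) * Real.log b)) /
      ((a - 1) ^ 2 * (a - b) * (b - 1) ^ 2) := by
  have ha1' : a - 1 ≠ 0 := sub_ne_zero.mpr ha1
  have hb1' : b - 1 ≠ 0 := sub_ne_zero.mpr hb1
  have hab' : a - b ≠ 0 := sub_ne_zero.mpr hab
  set c1 : ℝ := 1 / ((a - 1) ^ 2 * (a - b)) with hc1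
  set c2 : ℝ := -1 / ((b - 1) ^ 2 * (a - b)) with hc2
  set B : ℝ := 1 / ((a - 1) * (b - 1)) with hB
  set F : ℝ → ℝ := fun u =>
    c1 * Real.log ((a * u + 1) / (u + 1)) + c2 * Real.log ((b * u + 1) / (u + 1))
      - B * (u + 1)⁻¹ with hF
  have hderiv : ∀ x ∈ Set.Ici (0:ℝ), HasDerivAt F
      (((x + 1)⁻¹) ^ 2 * (a * x + 1)⁻¹ * (b * x + 1)⁻¹ * x ^ 2) x := by
    intro x hx
    have hx0 : (0:ℝ) ≤ x := hx
    have h1 : (0:ℝ) < x + 1 := by linarith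
    have h2 : (0:ℝ) < a * x + 1 := by nlinarith
    have h3 : (0:ℝ) < b * x + 1 := by nlinarith
    have hx1 : HasDerivAt (fun u : ℝ => u + 1) 1 x := (hasDerivAt_id x).add_const 1
    have hxa : HasDerivAt (fun u : ℝ => a * u + 1) a x := by
      simpa using ((hasDerivAt_id x).const_mul a).add_const 1
    have hxb : HasDerivAt (fun u : ℝ => b * u + 1) b x := by
      simpa using ((hasDerivAt_id x).const_mul b).add_const 1
    have hqa : HasDerivAt (fun u : ℝ => (a * u + 1) / (u + 1))
        ((a * (x + 1) - (a * x + 1) * 1) / (x + 1) ^ 2) x := hxa.div hx1 h1.ne'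
    have hqb : HasDerivAt (fun u : ℝ => (b * u + 1) / (u + 1))
        ((b * (x + 1) - (b * x + 1) * 1) / (x + 1) ^ 2) x := hxb.div hx1 h1.ne'
    have hqa0 : (a * x + 1) / (x + 1) ≠ 0 := by positivity
    have hqb0 : (b * x + 1) / (x + 1) ≠ 0 := by positivity
    have hla := (hqa.log hqa0).const_mul c1
    have hlb := (hqb.log hqb0).const_mul c2
    have hinv := (hx1.inv h1.ne').const_mul B
    have hFd := (hla.add hlb).sub hinv
    refine HasDerivAt.congr_deriv hFd ?_
    rw [hc1, hc2, hB]
    field_simp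
    ring
  have hnonneg : ∀ x ∈ Set.Ioi (0:ℝ),
      0 ≤ ((x + 1)⁻¹) ^ 2 * (a * x + 1)⁻¹ * (b * x + 1)⁻¹ * x ^ 2 := by
    intro x hx
    have hx0 : (0:ℝ) < x := hx
    have h2 : (0:ℝ) < a * x + 1 := by nlinarith
    have h3 : (0:ℝ) < b * x + 1 := by nlinarith
    positivity
  have tinv : Filter.Tendsto (fun u : ℝ => (u + 1)⁻¹) Filter.atTop (nhds 0) :=
    tendsto_inv_atTop_zero.comp (Filter.tendsto_atTop_add_const_right _ 1 Filter.tendsto_id)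
  have tq : ∀ c : ℝ, 0 < c → Filter.Tendsto (fun u : ℝ => (c * u + 1) / (u + 1))
      Filter.atTop (nhds c) := by
    intro c hc
    have h : ∀ᶠ u : ℝ in Filter.atTop,
        (c * u + 1) / (u + 1) = (c + u⁻¹) / (1 + u⁻¹) := by
      filter_upwards [Filter.eventually_ge_atTop (1:ℝ)] with u hu
      have hu0 : u ≠ 0 := by linarith
      have hu1 : u + 1 ≠ 0 := by linarith
      field_simp
    have t0 : Filter.Tendsto (fun u : ℝ => u⁻¹) Filter.atTop (nhds 0) :=
      tendsto_inv_atTop_zero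
    have hd : Filter.Tendsto (fun u : ℝ => (c + u⁻¹) / (1 + u⁻¹)) Filter.atTop
        (nhds ((c + 0) / (1 + 0))) :=
      (tendsto_const_nhds.add t0).div (tendsto_const_nhds.add t0)
        (by norm_num : (1:ℝ) + 0 ≠ 0)
    rw [Filter.tendsto_congr' h]
    simpa using hd
  have tF : Filter.Tendsto F Filter.atTop
      (nhds (c1 * Real.log a + c2 * Real.log b - B * 0)) := by
    apply Filter.Tendsto.sub
    · exact (((Real.continuousAt_log ha.ne').tendsto.comp (tq a ha)).const_mul c1).add
        (((Real.continuousAt_log hb.ne').tendsto.comp (tq b hb)).const_mul c2)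
    · exact tinv.const_mul B
  rw [MeasureTheory.integral_Ioi_of_hasDerivAt_of_nonneg' hderiv hnonneg tF]
  have hF0 : F 0 = -B := by
    simp [hF]
  rw [hF0, hc1, hc2, hB]
  field_simp
  ring
end
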